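/- Let $(X,\rho,\mu)$ be a $D$-regular space. Fix $\alpha$ with $(D-\eta)/2 < \alpha < D/2$. Let $\mathcal{Q}$ be disjoint dyadic cubes and for each $Q\in\mathcal{Q}$ a function $b^Q$ supported on $Q$ with $\int b^Q = 0$ and $\|b^Q\|_1\lesssim\mu(Q)$. Then $\int_{X\setminus E} \sum_k (S_k b)^2 \,d\mu \lesssim \sum_{Q\in\mathcal{Q}}\mu(Q)$, where $b=\sum_Q b^Q$, $E=\bigcup_Q CQ$, and $S_k$ is the nontangential short variation operator at scale $k$, assuming the single-scale reverse Hölder bound $(S_k b)^2(x) \lesssim \kappa^{-2kD}\sum_{Q:\,\mathrm{dist}(x,Q)\lesssim\kappa^k} (\kappa^k/\mathrm{diam}(Q))^{2\alpha}\|b^Q\|_1^2$ for $x\notin E$ and cubes of scale $\le k$. -/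

import Mathlib

open MeasureTheory Metric ENNReal

/-- Real-arithmetic core of the CZ estimate. -/
lemma svw_real_core {D α κ cd Cd Cb CE C₀ : ℝ}
    (hκ : 1 < κ) (hα : 0 < α)
    (hcd : 0 < cd) (hCd : cd ≤ Cd) (hCb : 0 < Cb) (hCE : 1 ≤ CE) (hC₀ : 0 ≤ C₀)
    (m : ℤ) (n : ℕ) (d : ℝ) (hd : cd * κ ^ m ≤ d) :
    C₀ * κ ^ (-(2 * (((m + (n:ℤ) : ℤ)) : ℝ)) * D) *
      ((κ ^ (m + (n:ℤ)) / d) ^ (2 * α) *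
        ((Cb * (Cd * (2 * Cd * κ ^ m) ^ D)) * Cb) *
        (Cd * ((CE + Cd + 1) * κ ^ (m + (n:ℤ))) ^ D)) ≤
    (C₀ * (cd ^ (2 * α))⁻¹ * ((Cb * (Cd * (2 * Cd) ^ D)) * Cb) *
      (Cd * (CE + Cd + 1) ^ D)) * (κ ^ (2 * α - D)) ^ n := by
  have hκ0 : (0:ℝ) < κ := lt_trans one_pos hκ
  have hCd0 : (0:ℝ) < Cd := lt_of_lt_of_le hcd hCd
  set k : ℤ := m + (n:ℤ) with hk
  have hzk : (0:ℝ) < κ ^ k := zpow_pos hκ0 k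
  have hzm : (0:ℝ) < κ ^ m := zpow_pos hκ0 m
  have hd0 : (0:ℝ) < d := lt_of_lt_of_le (by positivity) hd
  -- base change for the middle factor
  have hbase : κ ^ k / d ≤ κ ^ (n:ℤ) / cd := by
    have h1 : κ ^ k / d ≤ κ ^ k / (cd * κ ^ m) :=
      div_le_div_of_nonneg_left hzk.le (by positivity) hd
    have h2 : κ ^ k / (cd * κ ^ m) = κ ^ (n:ℤ) / cd := by
      rw [hk]
      field_simp
      rw [zpow_add₀ (ne_of_gt hκ0)]
    linarith [h1, h2.le]
  have hP : (κ ^ k / d) ^ (2 * α) ≤ (κ ^ (n:ℤ) / cd) ^ (2 * α) :=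
    Real.rpow_le_rpow (by positivity) hbase (by positivity)
  -- monotone step
  have step1 : C₀ * κ ^ (-(2 * ((k:ℤ) : ℝ)) * D) *
      ((κ ^ k / d) ^ (2 * α) * ((Cb * (Cd * (2 * Cd * κ ^ m) ^ D)) * Cb) *
        (Cd * ((CE + Cd + 1) * κ ^ k) ^ D)) ≤
      C₀ * κ ^ (-(2 * ((k:ℤ) : ℝ)) * D) *
      ((κ ^ (n:ℤ) / cd) ^ (2 * α) * ((Cb * (Cd * (2 * Cd * κ ^ m) ^ D)) * Cb) *
        (Cd * ((CE + Cd + 1) * κ ^ k) ^ D)) := by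
    gcongr
  refine le_trans step1 (le_of_eq ?_)
  -- now pure identity: rewrite all powers as rpow of κ and combine
  have hrw_k : (κ:ℝ) ^ k = κ ^ ((k:ℤ):ℝ) := (Real.rpow_intCast κ k).symm
  have hrw_m : (κ:ℝ) ^ m = κ ^ ((m:ℤ):ℝ) := (Real.rpow_intCast κ m).symm
  have hrw_n : (κ:ℝ) ^ (n:ℤ) = κ ^ ((n:ℕ):ℝ) := by
    rw [← Real.rpow_intCast κ (n:ℤ)]; norm_num
  have hdiv : (κ ^ (n:ℤ) / cd) ^ (2*α) = κ ^ (((n:ℕ):ℝ) * (2*α)) * (cd ^ (2*α))⁻¹ := by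
    rw [Real.div_rpow (by positivity) hcd.le, hrw_n, ← Real.rpow_mul hκ0.le, div_eq_mul_inv]
  have hM1 : (2 * Cd * κ ^ m) ^ D = (2*Cd) ^ D * κ ^ (((m:ℤ):ℝ) * D) := by
    rw [Real.mul_rpow (by positivity) hzm.le, hrw_m, ← Real.rpow_mul hκ0.le]
  have hM2 : ((CE + Cd + 1) * κ ^ k) ^ D = (CE+Cd+1) ^ D * κ ^ (((k:ℤ):ℝ) * D) := by
    rw [Real.mul_rpow (by positivity) hzk.le, hrw_k, ← Real.rpow_mul hκ0.le]
  have hR : ((κ:ℝ) ^ (2*α - D)) ^ n = κ ^ ((2*α - D) * ((n:ℕ):ℝ)) := by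
    rw [← Real.rpow_natCast (κ ^ (2*α-D)) n, ← Real.rpow_mul hκ0.le]
  rw [hdiv, hM1, hM2, hR]
  have hmul : ∀ a b : ℝ, κ ^ a * κ ^ b = κ ^ (a + b) := fun a b => (Real.rpow_add hκ0 a b).symm
  have hcomb : κ ^ (-(2 * ((k:ℤ):ℝ)) * D) * (κ ^ (((n:ℕ):ℝ) * (2*α)) * (κ ^ (((m:ℤ):ℝ) * D) * κ ^ (((k:ℤ):ℝ) * D))) = κ ^ ((2*α - D) * ((n:ℕ):ℝ)) := by
    rw [hmul, hmul, hmul]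
    congr 1
    have : ((k:ℤ):ℝ) = ((m:ℤ):ℝ) + ((n:ℕ):ℝ) := by rw [hk]; push_cast; ring
    rw [this]; ring
  calc C₀ * κ ^ (-(2 * ((k:ℤ):ℝ)) * D) *
      (κ ^ (((n:ℕ):ℝ) * (2*α)) * (cd ^ (2*α))⁻¹ * ((Cb * (Cd * ((2*Cd) ^ D * κ ^ (((m:ℤ):ℝ) * D)))) * Cb) *
        (Cd * ((CE+Cd+1) ^ D * κ ^ (((k:ℤ):ℝ) * D))))
      = (C₀ * (cd ^ (2 * α))⁻¹ * ((Cb * (Cd * (2 * Cd) ^ D)) * Cb) * (Cd * (CE + Cd + 1) ^ D)) *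
        (κ ^ (-(2 * ((k:ℤ):ℝ)) * D) * (κ ^ (((n:ℕ):ℝ) * (2*α)) * (κ ^ (((m:ℤ):ℝ) * D) * κ ^ (((k:ℤ):ℝ) * D)))) := by ring
    _ = _ := by rw [hcomb]

/-- Weak (1,1) core estimate for the short variation square function: given disjoint
Calderón–Zygmund cubes `Q_i` of scales `κ^{kQ i}` with bad functions of mass
`normb i ≲ μ(Q_i)`, and a family of operators `S_k` satisfying the single-scale reverse
Hölder bound (with exponent `(D-η)/2 < α < D/2`) outside the exceptional set
`E = ⋃ C·Q_i`, one has `∫_{X∖E} ∑_k (S_k b)² dμ ≲ ∑_i μ(Q_i)`. -/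
theorem short_variation_weak11_core {X : Type*} [MetricSpace X] [MeasurableSpace X]
    [BorelSpace X] (μ : Measure X) (D η α κ cd Cd Cb CE C₀ : ℝ)
    (hκ : 1 < κ) (hD : 0 < D) (hη : 0 < η) (hηD : η ≤ D)
    (hα₁ : (D - η) / 2 < α) (hα₂ : α < D / 2)
    (hcd : 0 < cd) (hCd : cd ≤ Cd) (hCb : 0 < Cb) (hCE : 1 ≤ CE) (hC₀ : 0 ≤ C₀)
    (hreg_lower : ∀ (x : X) (r : ℝ), 0 < r →
      ENNReal.ofReal ((1 / Cd) * r ^ D) ≤ μ (Metric.ball x r))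
    (hreg_upper : ∀ (x : X) (r : ℝ), 0 < r →
      μ (Metric.ball x r) ≤ ENNReal.ofReal (Cd * r ^ D)) :
    ∃ C' : ℝ≥0∞, C' ≠ ⊤ ∧
      ∀ (ι : Type) [Countable ι] (Q : ι → Set X) (kQ : ι → ℤ) (z : ι → X)
        (normb : ι → ℝ≥0∞) (S : ℤ → X → ℝ≥0∞),
        Pairwise (Function.onFun Disjoint Q) →
        (∀ i, MeasurableSet (Q i)) →
        (∀ i, z i ∈ Q i) →
        (∀ i, cd * κ ^ kQ i ≤ Metric.diam (Q i) ∧ Metric.diam (Q i) ≤ Cd * κ ^ kQ i) →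
        (∀ i, normb i ≤ ENNReal.ofReal Cb * μ (Q i)) →
        (∀ k, Measurable (S k)) →
        (∀ (k : ℤ) (x : X), x ∉ (⋃ i, Metric.ball (z i) (CE * κ ^ kQ i)) →
          S k x ^ 2 ≤ ENNReal.ofReal C₀ * ENNReal.ofReal (κ ^ (-(2 * (k : ℝ)) * D)) *
            ∑' i, Set.indicator
              {i' : ι | kQ i' ≤ k ∧ Metric.infDist x (Q i') ≤ CE * κ ^ k}
              (fun i' => ENNReal.ofReal ((κ ^ k / Metric.diam (Q i')) ^ (2 * α)) *
                normb i' ^ 2) i) →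
        ∫⁻ x in (⋃ i, Metric.ball (z i) (CE * κ ^ kQ i))ᶜ, ∑' k : ℤ, S k x ^ 2 ∂μ ≤
          C' * ∑' i, μ (Q i) := by
  have hκ0 : (0:ℝ) < κ := lt_trans one_pos hκ
  have hCd0 : (0:ℝ) < Cd := lt_of_lt_of_le hcd hCd
  have hα0 : (0:ℝ) < α := lt_of_le_of_lt (by linarith) hα₁
  -- the geometric ratio
  set r : ℝ := κ ^ (2 * α - D) with hr
  have hr0 : 0 < r := Real.rpow_pos_of_pos hκ0 _
  have hr1 : r < 1 := Real.rpow_lt_one_of_one_lt_of_neg hκ (by linarith)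
  set r' : ℝ≥0∞ := ENNReal.ofReal r with hr'
  have hr'1 : r' < 1 := by
    rw [hr', ← ENNReal.ofReal_one]
    exact ENNReal.ofReal_lt_ofReal_iff_of_nonneg hr0.le |>.mpr hr1
  set A : ℝ := C₀ * (cd ^ (2 * α))⁻¹ * ((Cb * (Cd * (2 * Cd) ^ D)) * Cb) *
      (Cd * (CE + Cd + 1) ^ D) with hA
  refine ⟨ENNReal.ofReal A * (1 - r')⁻¹, ?_, ?_⟩
  · exact ENNReal.mul_ne_top ENNReal.ofReal_ne_top
      (ENNReal.inv_ne_top.2 (by simpa using (tsub_pos_of_lt hr'1).ne'))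
  intro ι _ Q kQ z normb S hdisj hQmeas hz hdiam hnormb hSmeas hbound
  set C' : ℝ≥0∞ := ENNReal.ofReal A * (1 - r')⁻¹ with hC'
  set E : Set X := ⋃ i, Metric.ball (z i) (CE * κ ^ kQ i) with hE
  have hEmeas : MeasurableSet Eᶜ :=
    (MeasurableSet.iUnion fun i => measurableSet_ball).compl
  -- key sets and constants
  set B : ℤ → ι → Set X := fun k i =>
    {x | kQ i ≤ k ∧ Metric.infDist x (Q i) ≤ CE * κ ^ k} with hB
  set c : ℤ → ι → ℝ≥0∞ := fun k i =>
    ENNReal.ofReal ((κ ^ k / Metric.diam (Q i)) ^ (2 * α)) * normb i ^ 2 with hc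
  have hBmeas : ∀ k i, MeasurableSet (B k i) := by
    intro k i
    by_cases hk : kQ i ≤ k
    · have : B k i = {x | Metric.infDist x (Q i) ≤ CE * κ ^ k} := by
        ext x : 1; simp [hB, hk]
      rw [this]
      exact measurableSet_le measurable_infDist measurable_const
    · have : B k i = ∅ := by
        ext x; simp [hB, hk]
      rw [this]; exact MeasurableSet.empty
  have hzQk : ∀ i : ι, (0:ℝ) < κ ^ kQ i := fun i => zpow_pos hκ0 _
  have hQbounded : ∀ i, Bornology.IsBounded (Q i) := by
    intro i
    by_contra hb
    have h0 := Metric.diam_eq_zero_of_unbounded hb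
    have := (hdiam i).1
    nlinarith [hzQk i]
  have hQsub : ∀ i, Q i ⊆ Metric.ball (z i) (2 * Cd * κ ^ kQ i) := by
    intro i y hy
    have h1 : dist y (z i) ≤ Metric.diam (Q i) :=
      Metric.dist_le_diam_of_mem (hQbounded i) hy (hz i)
    have h2 := (hdiam i).2
    have := hzQk i
    calc dist y (z i) ≤ Cd * κ ^ kQ i := le_trans h1 h2
      _ < 2 * Cd * κ ^ kQ i := by nlinarith
  have hμQ : ∀ i, μ (Q i) ≤ ENNReal.ofReal (Cd * (2 * Cd * κ ^ kQ i) ^ D) :=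
    fun i => le_trans (measure_mono (hQsub i))
      (hreg_upper _ _ (by positivity))
  -- rewrite the tsum in the bound as a tsum of indicator functions of sets in X
  have hrew : ∀ (k : ℤ) (x : X),
      (∑' i, Set.indicator
          {i' : ι | kQ i' ≤ k ∧ Metric.infDist x (Q i') ≤ CE * κ ^ k}
          (fun i' => ENNReal.ofReal ((κ ^ k / Metric.diam (Q i')) ^ (2 * α)) *
            normb i' ^ 2) i)
        = ∑' i, (B k i).indicator (fun _ => c k i) x := by
    intro k x
    refine tsum_congr fun i => ?_
    by_cases h : kQ i ≤ k ∧ Metric.infDist x (Q i) ≤ CE * κ ^ k <;>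
      simp [Set.indicator_apply, hB, hc, Set.mem_setOf_eq, h]
  -- per-k integral bound
  have hperk : ∀ k : ℤ, ∫⁻ x in Eᶜ, S k x ^ 2 ∂μ ≤
      ∑' i, ENNReal.ofReal C₀ * ENNReal.ofReal (κ ^ (-(2 * (k : ℝ)) * D)) *
        (c k i * μ (B k i)) := by
    intro k
    have h1 : ∫⁻ x in Eᶜ, S k x ^ 2 ∂μ ≤
        ∫⁻ x in Eᶜ, (ENNReal.ofReal C₀ * ENNReal.ofReal (κ ^ (-(2 * (k : ℝ)) * D)) *
          ∑' i, (B k i).indicator (fun _ => c k i) x) ∂μ := by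
      refine setLIntegral_mono' hEmeas fun x hx => ?_
      have := hbound k x (by simpa [hE] using hx)
      rwa [hrew k x] at this
    refine le_trans h1 ?_
    refine le_trans (setLIntegral_le_lintegral _ _) ?_
    rw [lintegral_const_mul' _ _
      (ENNReal.mul_ne_top ENNReal.ofReal_ne_top ENNReal.ofReal_ne_top)]
    rw [lintegral_tsum fun i => (measurable_const.indicator (hBmeas k i)).aemeasurable]
    rw [← ENNReal.tsum_mul_left]
    refine ENNReal.tsum_le_tsum fun i => ?_
    rw [lintegral_indicator_const (hBmeas k i)]
  -- per (i,k) term bound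
  have hterm : ∀ (i : ι) (k : ℤ),
      ENNReal.ofReal C₀ * ENNReal.ofReal (κ ^ (-(2 * (k : ℝ)) * D)) * (c k i * μ (B k i)) ≤
      (if kQ i ≤ k then ENNReal.ofReal A * r' ^ (k - kQ i).toNat else 0) * μ (Q i) := by
    intro i k
    by_cases hk : kQ i ≤ k
    · simp only [hk, if_true]
      set m : ℤ := kQ i with hm
      set n : ℕ := (k - m).toNat with hn
      have hkn : k = m + (n : ℤ) := by
        rw [hn, Int.toNat_of_nonneg (sub_nonneg.2 hk)]; ring
      have hzK : (0:ℝ) < κ ^ k := zpow_pos hκ0 _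
      have hdQ : (0:ℝ) < Metric.diam (Q i) := lt_of_lt_of_le (by positivity) (hdiam i).1
      -- bound on μ (B k i)
      have hκmono : (κ:ℝ) ^ m ≤ κ ^ k := zpow_le_zpow_right₀ hκ.le hk
      have hBsub : B k i ⊆ Metric.ball (z i) ((CE + Cd + 1) * κ ^ k) := by
        intro x hx
        have hx2 : Metric.infDist x (Q i) ≤ CE * κ ^ k := hx.2
        have hlt : Metric.infDist x (Q i) < CE * κ ^ k + κ ^ k := by linarith
        obtain ⟨y, hyQ, hy⟩ := (Metric.infDist_lt_iff ⟨z i, hz i⟩).1 hlt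
        have h3 : dist y (z i) ≤ Metric.diam (Q i) :=
          Metric.dist_le_diam_of_mem (hQbounded i) hyQ (hz i)
        have h4 : Metric.diam (Q i) ≤ Cd * κ ^ k := le_trans (hdiam i).2 (by nlinarith)
        have h5 : dist x (z i) ≤ dist x y + dist y (z i) := dist_triangle _ _ _
        simp only [Metric.mem_ball]
        calc dist x (z i) ≤ dist x y + dist y (z i) := h5
          _ < (CE * κ ^ k + κ ^ k) + Cd * κ ^ k := by linarith
          _ = (CE + Cd + 1) * κ ^ k := by ring
      have hμB : μ (B k i) ≤ ENNReal.ofReal (Cd * ((CE + Cd + 1) * κ ^ k) ^ D) :=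
        le_trans (measure_mono hBsub) (hreg_upper _ _ (by positivity))
      -- assemble ENNReal bound
      have hnb2 : normb i ^ 2 ≤
          (ENNReal.ofReal Cb * ENNReal.ofReal (Cd * (2 * Cd * κ ^ m) ^ D)) *
            (ENNReal.ofReal Cb * μ (Q i)) := by
        have h1 := hnormb i
        have h2 := hμQ i
        calc normb i ^ 2 = normb i * normb i := sq (normb i) ▸ by ring
          _ ≤ (ENNReal.ofReal Cb * μ (Q i)) * (ENNReal.ofReal Cb * μ (Q i)) :=
            mul_le_mul' h1 h1
          _ ≤ (ENNReal.ofReal Cb * ENNReal.ofReal (Cd * (2 * Cd * κ ^ m) ^ D)) *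
              (ENNReal.ofReal Cb * μ (Q i)) := by
            gcongr
      have hchain : ENNReal.ofReal C₀ * ENNReal.ofReal (κ ^ (-(2 * (k : ℝ)) * D)) *
          (c k i * μ (B k i)) ≤
          ENNReal.ofReal (C₀ * κ ^ (-(2 * (k : ℝ)) * D) *
            ((κ ^ k / Metric.diam (Q i)) ^ (2 * α) *
              ((Cb * (Cd * (2 * Cd * κ ^ m) ^ D)) * Cb) *
              (Cd * ((CE + Cd + 1) * κ ^ k) ^ D))) * μ (Q i) := by
        have expand : ENNReal.ofReal (C₀ * κ ^ (-(2 * (k : ℝ)) * D) *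
            ((κ ^ k / Metric.diam (Q i)) ^ (2 * α) *
              ((Cb * (Cd * (2 * Cd * κ ^ m) ^ D)) * Cb) *
              (Cd * ((CE + Cd + 1) * κ ^ k) ^ D))) =
            ENNReal.ofReal C₀ * ENNReal.ofReal (κ ^ (-(2 * (k : ℝ)) * D)) *
            (ENNReal.ofReal ((κ ^ k / Metric.diam (Q i)) ^ (2 * α)) *
              (ENNReal.ofReal Cb * ENNReal.ofReal (Cd * (2 * Cd * κ ^ m) ^ D) *
                ENNReal.ofReal Cb) *
              ENNReal.ofReal (Cd * ((CE + Cd + 1) * κ ^ k) ^ D)) := by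
        /-expand-/
          rw [ENNReal.ofReal_mul (by positivity), ENNReal.ofReal_mul hC₀,
            ENNReal.ofReal_mul (by positivity),
            ENNReal.ofReal_mul (Real.rpow_nonneg (by positivity) _),
            ENNReal.ofReal_mul (by positivity)]
          rw [ENNReal.ofReal_mul hCb.le]
        rw [expand]
        calc ENNReal.ofReal C₀ * ENNReal.ofReal (κ ^ (-(2 * (k : ℝ)) * D)) *
            (c k i * μ (B k i))
            ≤ ENNReal.ofReal C₀ * ENNReal.ofReal (κ ^ (-(2 * (k : ℝ)) * D)) *
              ((ENNReal.ofReal ((κ ^ k / Metric.diam (Q i)) ^ (2 * α)) *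
                ((ENNReal.ofReal Cb * ENNReal.ofReal (Cd * (2 * Cd * κ ^ m) ^ D)) *
                  (ENNReal.ofReal Cb * μ (Q i)))) *
                ENNReal.ofReal (Cd * ((CE + Cd + 1) * κ ^ k) ^ D)) := by
              simp only [hc]
              exact mul_le_mul' le_rfl
                (mul_le_mul' (mul_le_mul' le_rfl hnb2) hμB)
          _ = ENNReal.ofReal C₀ * ENNReal.ofReal (κ ^ (-(2 * (k : ℝ)) * D)) *
            (ENNReal.ofReal ((κ ^ k / Metric.diam (Q i)) ^ (2 * α)) *
              (ENNReal.ofReal Cb * ENNReal.ofReal (Cd * (2 * Cd * κ ^ m) ^ D) *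
                ENNReal.ofReal Cb) *
              ENNReal.ofReal (Cd * ((CE + Cd + 1) * κ ^ k) ^ D)) * μ (Q i) := by
              ring
      refine le_trans hchain ?_
      refine mul_le_mul_left ?_ (μ (Q i))
      have hreal : C₀ * κ ^ (-(2 * (k : ℝ)) * D) *
          ((κ ^ k / Metric.diam (Q i)) ^ (2 * α) *
            ((Cb * (Cd * (2 * Cd * κ ^ m) ^ D)) * Cb) *
            (Cd * ((CE + Cd + 1) * κ ^ k) ^ D)) ≤ A * r ^ n := by
        rw [hkn, hA, hr]
        exact svw_real_core hκ hα0 hcd hCd hCb hCE hC₀ m n (Metric.diam (Q i)) (hdiam i).1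
      calc ENNReal.ofReal (C₀ * κ ^ (-(2 * (k : ℝ)) * D) *
            ((κ ^ k / Metric.diam (Q i)) ^ (2 * α) *
              ((Cb * (Cd * (2 * Cd * κ ^ m) ^ D)) * Cb) *
              (Cd * ((CE + Cd + 1) * κ ^ k) ^ D)))
          ≤ ENNReal.ofReal (A * r ^ n) := ENNReal.ofReal_le_ofReal hreal
        _ = ENNReal.ofReal A * r' ^ n := by
            rw [ENNReal.ofReal_mul' (pow_nonneg hr0.le n), ENNReal.ofReal_pow hr0.le]
    · have hBe : B k i = ∅ := by
        ext x; simp [hB, hk]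
      simp [hBe, hk]
  -- per-i geometric series
  have hgeom : ∀ i : ι,
      (∑' k : ℤ, (if kQ i ≤ k then ENNReal.ofReal A * r' ^ (k - kQ i).toNat else 0) * μ (Q i))
        = C' * μ (Q i) := by
    intro i
    rw [ENNReal.tsum_mul_right]
    congr 1
    set m : ℤ := kQ i with hm
    set f : ℤ → ℝ≥0∞ := fun k => if m ≤ k then ENNReal.ofReal A * r' ^ (k - m).toNat else 0
      with hf
    have hg : Function.Injective (fun n : ℕ => m + (n:ℤ)) := fun a b h => by
      simpa using h
    have hsupp : Function.support f ⊆ Set.range (fun n : ℕ => m + (n:ℤ)) := by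
      intro k hk
      by_cases h : m ≤ k
      · exact ⟨(k - m).toNat, by simp [Int.toNat_of_nonneg (sub_nonneg.2 h)]⟩
      · exfalso; apply hk; simp [hf, h]
    have := hg.tsum_eq hsupp
    rw [← this]
    have hfg : ∀ n : ℕ, f (m + (n:ℤ)) = ENNReal.ofReal A * r' ^ n := by
      intro n
      simp only [hf]
      rw [if_pos (le_add_of_nonneg_right (by positivity))]
      congr 1
      simp
    calc (∑' n : ℕ, f (m + (n:ℤ))) = ∑' n : ℕ, ENNReal.ofReal A * r' ^ n := by
          exact tsum_congr hfg
      _ = ENNReal.ofReal A * ∑' n : ℕ, r' ^ n := ENNReal.tsum_mul_left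
      _ = C' := by rw [ENNReal.tsum_geometric, hC']
  -- main chain
  calc ∫⁻ x in Eᶜ, ∑' k : ℤ, S k x ^ 2 ∂μ
      = ∑' k : ℤ, ∫⁻ x in Eᶜ, S k x ^ 2 ∂μ :=
        lintegral_tsum fun k => ((hSmeas k).pow_const 2).aemeasurable
    _ ≤ ∑' k : ℤ, ∑' i, ENNReal.ofReal C₀ * ENNReal.ofReal (κ ^ (-(2 * (k : ℝ)) * D)) *
          (c k i * μ (B k i)) := ENNReal.tsum_le_tsum hperk
    _ = ∑' i, ∑' k : ℤ, ENNReal.ofReal C₀ * ENNReal.ofReal (κ ^ (-(2 * (k : ℝ)) * D)) *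
          (c k i * μ (B k i)) := ENNReal.tsum_comm
    _ ≤ ∑' i, ∑' k : ℤ,
          (if kQ i ≤ k then ENNReal.ofReal A * r' ^ (k - kQ i).toNat else 0) * μ (Q i) :=
        ENNReal.tsum_le_tsum fun i => ENNReal.tsum_le_tsum fun k => hterm i k
    _ = ∑' i, C' * μ (Q i) := tsum_congr hgeom
    _ = C' * ∑' i, μ (Q i) := ENNReal.tsum_mul_left
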